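/- arXiv:2111.11197 — 2 statements merged into one kernel-verified Lean document; each statement's English description precedes it below -/
import Mathlib

section
/- If M : Ω → ℝ³ is smooth (on an open set Ω ⊆ ℝ^d) and A is a constant symmetric d × d real matrix, then M × (∇·(∇M A)) = ∇·(M × (∇M A)), i.e., the cross product of M with the row-wise divergence of the matrix ∇M·A equals the row-wise divergence of the matrix whose columns are M crossed with the columns of ∇M·A. -/
open scoped BigOperators

/-- Cross product on `EuclideanSpace ℝ (Fin 3)`. -/
noncomputable def cross3 (a b : EuclideanSpace ℝ (Fin 3)) : EuclideanSpace ℝ (Fin 3) :=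
  WithLp.toLp 2 (crossProduct (a : Fin 3 → ℝ) (b : Fin 3 → ℝ))

/-- Partial derivative `∂ᵢ M` in coordinate direction `i`. -/
noncomputable def pderiv {d : ℕ} (M : EuclideanSpace ℝ (Fin d) → EuclideanSpace ℝ (Fin 3))
    (i : Fin d) (x : EuclideanSpace ℝ (Fin d)) : EuclideanSpace ℝ (Fin 3) :=
  fderiv ℝ M x (EuclideanSpace.single i 1)

/-- Row-wise divergence of a `3 × d` matrix field given by its columns:
`(div G)(x) = Σᵢ ∂ᵢ (i-th column of G)(x)`. -/
noncomputable def divCols {d : ℕ}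
    (G : EuclideanSpace ℝ (Fin d) → Fin d → EuclideanSpace ℝ (Fin 3))
    (x : EuclideanSpace ℝ (Fin d)) : EuclideanSpace ℝ (Fin 3) :=
  ∑ i, fderiv ℝ (fun y => G y i) x (EuclideanSpace.single i 1)

/-- The `i`-th column of the matrix `∇M A`: `Σⱼ Aⱼᵢ ∂ⱼ M`. -/
noncomputable def gradMulCol {d : ℕ} (A : Matrix (Fin d) (Fin d) ℝ)
    (M : EuclideanSpace ℝ (Fin d) → EuclideanSpace ℝ (Fin 3))
    (x : EuclideanSpace ℝ (Fin d)) (i : Fin d) : EuclideanSpace ℝ (Fin 3) :=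
  ∑ j, A j i • pderiv M j x

noncomputable def crossCLM :
    EuclideanSpace ℝ (Fin 3) →L[ℝ] EuclideanSpace ℝ (Fin 3) →L[ℝ] EuclideanSpace ℝ (Fin 3) :=
  LinearMap.toContinuousLinearMap
    { toFun := fun a => LinearMap.toContinuousLinearMap
        ((LinearMap.mk₂ ℝ cross3
            (fun a b c => by simp [cross3, map_add, LinearMap.add_apply])
            (fun r a b => by simp [cross3, map_smul, LinearMap.smul_apply])
            (fun a b c => by simp [cross3, map_add])
            (fun r a b => by simp [cross3, map_smul]) :
            EuclideanSpace ℝ (Fin 3) →ₗ[ℝ]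
            EuclideanSpace ℝ (Fin 3) →ₗ[ℝ] EuclideanSpace ℝ (Fin 3)) a)
      map_add' := by intro a b; ext v; simp
      map_smul' := by intro c a; ext v; simp }

lemma crossCLM_apply (a b : EuclideanSpace ℝ (Fin 3)) : crossCLM a b = cross3 a b := rfl

lemma cross3_anti (a b : EuclideanSpace ℝ (Fin 3)) : cross3 a b = - cross3 b a := by
  unfold cross3; rw [← WithLp.toLp_neg, ← cross_anticomm]

lemma fderiv_cross {d : ℕ} {f g : EuclideanSpace ℝ (Fin d) → EuclideanSpace ℝ (Fin 3)}
    {x : EuclideanSpace ℝ (Fin d)} (hf : DifferentiableAt ℝ f x) (hg : DifferentiableAt ℝ g x)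
    (v : EuclideanSpace ℝ (Fin d)) :
    fderiv ℝ (fun y => cross3 (f y) (g y)) x v =
      cross3 (fderiv ℝ f x v) (g x) + cross3 (f x) (fderiv ℝ g x v) := by
  have hb := crossCLM.isBoundedBilinearMap
  have h1 : HasFDerivAt (fun y => cross3 (f y) (g y))
      ((hb.deriv (f x, g x)).comp ((fderiv ℝ f x).prod (fderiv ℝ g x))) x :=
    by have := (hb.hasFDerivAt (f x, g x)).comp x ((hf.hasFDerivAt).prodMk (hg.hasFDerivAt))
       exact this
  rw [h1.fderiv]
  simp [hb.deriv_apply, crossCLM_apply, add_comm]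

/-- For `M` smooth on an open set and `A` constant symmetric,
`M × (∇·(∇M A)) = ∇·(M × (∇M A))`. -/
theorem cross_div_eq_div_cross {d : ℕ} (Ω : Set (EuclideanSpace ℝ (Fin d)))
    (hΩ : IsOpen Ω) (M : EuclideanSpace ℝ (Fin d) → EuclideanSpace ℝ (Fin 3))
    (hM : ContDiffOn ℝ 2 M Ω) (A : Matrix (Fin d) (Fin d) ℝ) (hA : A.transpose = A) :
    ∀ x ∈ Ω,
      cross3 (M x) (divCols (gradMulCol A M) x) =
        divCols (fun y i => cross3 (M y) (gradMulCol A M y i)) x := by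
  intro x hx
  have hMx : ContDiffAt ℝ 2 M x := hM.contDiffAt (hΩ.mem_nhds hx)
  have hMd : DifferentiableAt ℝ M x := hMx.differentiableAt (by norm_num)
  have hfd : ContDiffAt ℝ 1 (fderiv ℝ M) x := hMx.fderiv_right (by norm_num)
  have hPd : ∀ j, DifferentiableAt ℝ (fun y => pderiv M j y) x := fun j =>
    (hfd.differentiableAt (by norm_num)).clm_apply (differentiableAt_const _)
  have hNd : ∀ i, DifferentiableAt ℝ (fun y => gradMulCol A M y i) x := by
    intro i
    exact DifferentiableAt.fun_sum fun j _ => (hPd j).const_smul (A j i)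
  -- abbreviations
  set e : Fin d → EuclideanSpace ℝ (Fin d) := fun i => EuclideanSpace.single i 1 with he
  have key : ∀ i, fderiv ℝ (fun y => cross3 (M y) (gradMulCol A M y i)) x (e i) =
      cross3 (pderiv M i x) (gradMulCol A M x i) +
        cross3 (M x) (fderiv ℝ (fun y => gradMulCol A M y i) x (e i)) := by
    intro i
    exact fderiv_cross hMd (hNd i) (e i)
  have hS : (∑ i, cross3 (pderiv M i x) (gradMulCol A M x i)) = 0 := by
    have hexp : ∀ i, cross3 (pderiv M i x) (gradMulCol A M x i) =
        ∑ j, A j i • cross3 (pderiv M i x) (pderiv M j x) := by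
      intro i
      rw [← crossCLM_apply]
      unfold gradMulCol
      rw [map_sum]
      exact Finset.sum_congr rfl fun j _ => by rw [map_smul]; rfl
    set S := ∑ i, cross3 (pderiv M i x) (gradMulCol A M x i) with hSdef
    have h1 : S = ∑ i, ∑ j, A j i • cross3 (pderiv M i x) (pderiv M j x) := by
      exact Finset.sum_congr rfl fun i _ => hexp i
    have h2 : S = -S := by
      conv_lhs => rw [h1, Finset.sum_comm]
      rw [h1, ← Finset.sum_neg_distrib]
      refine Finset.sum_congr rfl fun j _ => ?_
      rw [← Finset.sum_neg_distrib]
      refine Finset.sum_congr rfl fun i _ => ?_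
      have hAij : A i j = A j i := by
        conv_lhs => rw [← hA, Matrix.transpose_apply]
      rw [hAij, cross3_anti, smul_neg]
    have : (2 : ℝ) • S = 0 := by
      rw [two_smul]
      nth_rewrite 2 [h2]
      simp
    have h2ne : (2 : ℝ) ≠ 0 := by norm_num
    rcases smul_eq_zero.mp this with h | h
    · exact absurd h h2ne
    · exact h
  -- put it together
  unfold divCols
  rw [← crossCLM_apply, map_sum]
  rw [Finset.sum_congr rfl fun i _ => key i, Finset.sum_add_distrib, hS, zero_add]
  exact Finset.sum_congr rfl fun i _ => (crossCLM_apply _ _)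
end

section
/- If k ∈ K^{p,q} with q ≥ 0 (so k ∈ C^q_c with supp k = [-1,1]) and f is 1-periodic and continuously differentiable, then |∫ k_μ(x) f(x/ε) dx − ∫₀¹ f(y) dy| → 0 as ε/μ → 0; specifically for k of compact support in C^1 and f 1-periodic C^1, the averaging against k_μ of the ε-oscillatory function converges to the mean of f. -/
open MeasureTheory intervalIntegral

/-- The primitive of a continuous periodic function minus its mean is bounded. -/
lemma aux_primitive_bound (f : ℝ → ℝ) (hf : Continuous f)
    (hper : Function.Periodic f 1) :
    ∃ C₂ : ℝ, 0 ≤ C₂ ∧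
      ∀ u : ℝ, |∫ s in (0:ℝ)..u, (f s - ∫ y in (0:ℝ)..1, f y)| ≤ C₂ := by
  set c : ℝ := ∫ y in (0:ℝ)..1, f y with hc
  set g : ℝ → ℝ := fun s => f s - c with hg_def
  have hg : Continuous g := hf.sub continuous_const
  have hgper : Function.Periodic g 1 := by
    intro x; simp [hg_def, hper x]
  set H : ℝ → ℝ := fun u => ∫ s in (0:ℝ)..u, g s with hH_def
  have hHcont : Continuous H :=
    intervalIntegral.continuous_primitive (fun a b => hg.intervalIntegrable a b) 0
  have hg10 : ∫ s in (0:ℝ)..1, g s = 0 := by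
    rw [hg_def, intervalIntegral.integral_sub (hf.intervalIntegrable _ _)
      (intervalIntegrable_const)]
    simp [hc]
  have hHper : Function.Periodic H 1 := by
    intro u
    have h1 : ∫ s in u..(u+1), g s = ∫ s in (0:ℝ)..(0+1:ℝ), g s :=
      hgper.intervalIntegral_add_eq u 0
    have h2 : H (u+1) = H u + ∫ s in u..(u+1), g s :=
      (intervalIntegral.integral_add_adjacent_intervals
        (hg.intervalIntegrable _ _) (hg.intervalIntegrable _ _)).symm
    rw [h2, h1]
    simp [hg10]
  obtain ⟨C₂, hC₂⟩ := (isCompact_Icc (a := (0:ℝ)) (b := 1)).exists_bound_of_continuousOn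
    hHcont.continuousOn
  refine ⟨C₂, ?_, ?_⟩
  · exact le_trans (norm_nonneg (H 0)) (hC₂ 0 (by norm_num))
  · intro u
    obtain ⟨y, hy, hyu⟩ := hHper.exists_mem_Ico₀ one_pos u
    have : H u = H y := hyu
    calc |H u| = ‖H y‖ := by rw [this]; rfl
    _ ≤ C₂ := hC₂ y ⟨hy.1, hy.2.le⟩

/-- Main interval estimate via integration by parts. -/
lemma aux_main (k f : ℝ → ℝ) (hk : ContDiff ℝ 1 k)
    (hsupp : ∀ x : ℝ, 1 < |x| → k x = 0)
    (hf : Continuous f)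
    (c C₁ C₂ : ℝ)
    (hC₁ : ∀ y ∈ Set.Icc (-2:ℝ) 2, |deriv k y| ≤ C₁)
    (hC₂ : ∀ u : ℝ, |∫ s in (0:ℝ)..u, (f s - c)| ≤ C₂)
    (hC₂0 : 0 ≤ C₂)
    (δ : ℝ) (hδ : 0 < δ) :
    |∫ y in (-2:ℝ)..2, k y * (f (y/δ) - c)| ≤ 4*C₁*C₂*δ := by
  set G : ℝ → ℝ := fun s => f s - c with hG_def
  have hG : Continuous G := hf.sub continuous_const
  have hGd : Continuous (fun s : ℝ => G (s/δ)) := hG.comp (continuous_id.div_const δ)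
  set F : ℝ → ℝ := fun t => ∫ s in (0:ℝ)..t, G (s/δ) with hF_def
  have hF_bound : ∀ t : ℝ, |F t| ≤ C₂ * δ := by
    intro t
    have : F t = δ • ∫ u in ((0:ℝ)/δ)..(t/δ), G u :=
      intervalIntegral.integral_comp_div (a := 0) (b := t) (c := δ) (f := G) hδ.ne'
    rw [this]
    simp only [smul_eq_mul, zero_div, abs_mul, abs_of_pos hδ]
    calc δ * |∫ u in (0:ℝ)..(t/δ), G u| ≤ δ * C₂ := by
          exact mul_le_mul_of_nonneg_left (hC₂ _) hδ.le
    _ = C₂ * δ := mul_comm _ _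
  have hku : ∀ x ∈ Set.uIcc (-2:ℝ) 2, HasDerivAt k (deriv k x) x :=
    fun x _ => ((hk.differentiable one_ne_zero) x).hasDerivAt
  have hFv : ∀ x ∈ Set.uIcc (-2:ℝ) 2, HasDerivAt F (G (x/δ)) x :=
    fun x _ => (hGd.integral_hasStrictDerivAt 0 x).hasDerivAt
  have hu' : IntervalIntegrable (deriv k) volume (-2) 2 :=
    (hk.continuous_deriv le_rfl).intervalIntegrable _ _
  have hv' : IntervalIntegrable (fun x => G (x/δ)) volume (-2) 2 :=
    hGd.intervalIntegrable _ _
  have hibp := intervalIntegral.integral_mul_deriv_eq_deriv_mul hku hFv hu' hv'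
  have hk2 : k 2 = 0 := hsupp 2 (by norm_num)
  have hkm2 : k (-2) = 0 := hsupp (-2) (by rw [abs_neg]; norm_num)
  rw [hk2, hkm2] at hibp
  simp only [zero_mul, sub_zero, zero_sub] at hibp
  have : |∫ x in (-2:ℝ)..2, k x * G (x/δ)| = |∫ x in (-2:ℝ)..2, deriv k x * F x| := by
    rw [hibp, abs_neg]
  rw [show (∫ y in (-2:ℝ)..2, k y * (f (y/δ) - c)) = ∫ x in (-2:ℝ)..2, k x * G (x/δ) from rfl,
    this]
  have hbound : ∀ x ∈ Set.uIoc (-2:ℝ) 2, ‖deriv k x * F x‖ ≤ C₁ * (C₂ * δ) := by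
    intro x hx
    have hx' : x ∈ Set.Icc (-2:ℝ) 2 := by
      rw [Set.uIoc_of_le (by norm_num : (-2:ℝ) ≤ 2)] at hx
      exact ⟨hx.1.le, hx.2⟩
    rw [Real.norm_eq_abs, abs_mul]
    exact mul_le_mul (hC₁ x hx') (hF_bound x) (abs_nonneg _)
      (le_trans (abs_nonneg _) (hC₁ x hx'))
  calc |∫ x in (-2:ℝ)..2, deriv k x * F x| ≤ C₁ * (C₂ * δ) * |2 - (-2)| :=
        intervalIntegral.norm_integral_le_of_norm_le_const hbound
  _ = 4*C₁*C₂*δ := by norm_num; ring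

/-- Averaging an `ε`-oscillatory periodic function against a scaled `C¹` kernel
converges to the mean of the function: there is a constant `C` (depending on `k`
and `f`) such that for all `0 < ε < μ`,
`|∫ k_μ(x) f(x/ε) dx − ∫₀¹ f| ≤ C (ε/μ)`. -/
theorem kernel_averaging_periodic (k f : ℝ → ℝ)
    (hk : ContDiff ℝ 1 k)
    (hsupp : ∀ x : ℝ, 1 < |x| → k x = 0)
    (hone : ∫ x, k x = 1)
    (hf : Continuous f) (hper : Function.Periodic f 1) :
    ∃ C : ℝ, 0 ≤ C ∧ ∀ ε μ : ℝ, 0 < ε → ε < μ →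
      |(∫ x, (1 / μ) * k (x / μ) * f (x / ε)) - ∫ y in (0:ℝ)..1, f y| ≤
        C * (ε / μ) := by
  set c : ℝ := ∫ y in (0:ℝ)..1, f y with hc
  obtain ⟨C₂, hC₂0, hC₂⟩ := aux_primitive_bound f hf hper
  obtain ⟨C₁, hC₁⟩ := (isCompact_Icc (a := (-2:ℝ)) (b := 2)).exists_bound_of_continuousOn
    (hk.continuous_deriv le_rfl).continuousOn
  have hC₁0 : 0 ≤ C₁ := le_trans (norm_nonneg _) (hC₁ 0 (by norm_num))
  refine ⟨4*C₁*C₂, by positivity, ?_⟩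
  intro ε μ hε hεμ
  have hμ : 0 < μ := hε.trans hεμ
  set δ : ℝ := ε / μ with hδ_def
  have hδ : 0 < δ := div_pos hε hμ
  set g : ℝ → ℝ := fun y => k y * f (y/δ) with hg_def
  -- change of variables
  have hstep1 : (∫ x, (1 / μ) * k (x / μ) * f (x / ε)) = ∫ y, g y := by
    have heq : (fun x => (1 / μ) * k (x / μ) * f (x / ε)) = fun x => (1/μ) * g (x/μ) := by
      ext x
      have : (x / μ) / δ = x / ε := by
        rw [hδ_def]; field_simp
      rw [hg_def]; simp only [this]; ring
    rw [heq, MeasureTheory.integral_const_mul,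
      MeasureTheory.Measure.integral_comp_div g μ, abs_of_pos hμ, smul_eq_mul]
    field_simp
  -- restrict to interval
  have hsub : ∀ h : ℝ → ℝ, (∀ y, k y = 0 → h y = 0) →
      Function.support h ⊆ Set.Ioc (-2:ℝ) 2 := by
    intro h hh y hy
    by_contra hy2
    apply hy
    apply hh
    apply hsupp
    simp only [Set.mem_Ioc, not_and_or, not_lt, not_le] at hy2
    rcases hy2 with h1 | h2
    · rw [abs_of_nonpos (by linarith)]; linarith
    · rw [abs_of_pos (by linarith)]; linarith
  have hstep2 : (∫ y, g y) = ∫ y in (-2:ℝ)..2, g y :=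
    (intervalIntegral.integral_eq_integral_of_support_subset
      (hsub g (fun y hy => by rw [hg_def]; simp [hy]))).symm
  have hkint : (∫ y in (-2:ℝ)..2, k y) = 1 := by
    rw [intervalIntegral.integral_eq_integral_of_support_subset
      (hsub k (fun y hy => hy)), hone]
  have hfd : Continuous (fun y : ℝ => f (y/δ)) := hf.comp (continuous_id.div_const δ)
  have hstep3 : (∫ y in (-2:ℝ)..2, g y) - c = ∫ y in (-2:ℝ)..2, k y * (f (y/δ) - c) := by
    have : (fun y => k y * (f (y/δ) - c)) = fun y => g y - c * k y := by
      ext y; rw [hg_def]; ring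
    rw [this, intervalIntegral.integral_sub (f := g) (g := fun y => c * k y)
      (((hk.continuous).mul hfd).intervalIntegrable _ _)
      ((continuous_const.mul hk.continuous).intervalIntegrable _ _),
      intervalIntegral.integral_const_mul, hkint, mul_one]
  rw [hstep1, hstep2, hstep3]
  calc |∫ y in (-2:ℝ)..2, k y * (f (y/δ) - c)| ≤ 4*C₁*C₂*δ :=
        aux_main k f hk hsupp hf c C₁ C₂
          (fun y hy => hC₁ y hy) (fun u => hC₂ u) hC₂0 δ hδ
  _ = 4*C₁*C₂*(ε/μ) := by rw [hδ_def]
end
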